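/- Let R = ℂ[x,y,z,w]/(x³+y³+z³+w³) with its standard grading, and let E : R → R be the Euler derivation, i.e., the unique ℂ-linear derivation of R sending the images of x, y, z, w to themselves respectively (equivalently, E(r) = d·r for every homogeneous r ∈ R_d). Then every ℂ-linear derivation δ : R → R that is homogeneous of degree 0 (i.e., δ(R_d) ⊆ R_d for all d) is a ℂ-scalar multiple of E. -/

import Mathlib

open MvPolynomial

/-- A `k`-linear map `δ : R → R` is a differential operator of order at most `n`:
order `≤ 0` means `δ (r * s) = r * δ s` for all `r s`, and order `≤ n + 1` means all
commutators `[δ, μ_r]` with multiplication operators have order `≤ n`. -/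
def IsDiffOpOfOrder (k : Type*) {R : Type*} [CommRing k] [CommRing R] [Algebra k R] :
    ℕ → (R →ₗ[k] R) → Prop
  | 0 => fun δ => ∀ r s : R, δ (r * s) = r * δ s
  | n + 1 => fun δ => ∀ r : R,
      IsDiffOpOfOrder k n (δ ∘ₗ LinearMap.mulLeft k r - LinearMap.mulLeft k r ∘ₗ δ)

/-- `δ` is homogeneous of degree `e ∈ ℤ` with respect to the grading `𝒜`: it sends
elements of degree `d` to elements of degree `d + e`, interpreted as `0` when `d + e < 0`. -/
def HomogeneousOfDegree {k R : Type*} [CommRing k] [CommRing R] [Algebra k R]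
    (𝒜 : ℕ → Submodule k R) (δ : R →ₗ[k] R) (e : ℤ) : Prop :=
  ∀ (d : ℕ), ∀ r ∈ 𝒜 d,
    (∀ m : ℕ, (m : ℤ) = (d : ℤ) + e → δ r ∈ 𝒜 m) ∧ ((d : ℤ) + e < 0 → δ r = 0)

/-- The grading induced on a quotient of a polynomial ring by a (homogeneous) ideal:
the degree-`d` piece is the image of the degree-`d` homogeneous polynomials. -/
noncomputable def quotGrade {σ : Type*} (k : Type*) [CommRing k]
    (I : Ideal (MvPolynomial σ k)) (d : ℕ) : Submodule k (MvPolynomial σ k ⧸ I) :=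
  (MvPolynomial.homogeneousSubmodule σ k d).map (Ideal.Quotient.mkₐ k I).toLinearMap

/-- The Fermat cubic cone. -/
noncomputable def cubicIdeal : Ideal (MvPolynomial (Fin 4) ℂ) :=
  Ideal.span {X 0 ^ 3 + X 1 ^ 3 + X 2 ^ 3 + X 3 ^ 3}

/-- `R = ℂ[x,y,z,w]/(x³+y³+z³+w³)`. -/
abbrev RCubic : Type := MvPolynomial (Fin 4) ℂ ⧸ cubicIdeal

lemma fermat_L1 (p : MvPolynomial (Fin 4) ℂ) (hp : p.IsHomogeneous 1) :
    p = ∑ j : Fin 4, C (coeff (Finsupp.single j 1) p) * X j := by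
  ext m
  rw [MvPolynomial.coeff_sum]
  simp only [← MvPolynomial.smul_eq_C_mul, MvPolynomial.coeff_smul, MvPolynomial.coeff_X',
    smul_eq_mul, mul_ite, mul_one, mul_zero]
  by_cases h : MvPolynomial.coeff m p = 0
  · rw [h]
    refine (Finset.sum_eq_zero fun j _ => ?_).symm
    split_ifs with hj
    · rw [hj, h]
    · rfl
  · have hd : m.degree = 1 := by
      by_contra hne
      exact h (hp.coeff_eq_zero hne)
    have h4 : m 0 + m 1 + m 2 + m 3 = 1 := by
      have : ∑ i : Fin 4, m i = m.degree := by
        rw [Finsupp.degree]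
        exact (Finset.sum_subset (Finset.subset_univ _)
          (fun i _ hi => Finsupp.notMem_support_iff.mp hi)).symm
      rw [Fin.sum_univ_four] at this
      omega
    have : (m 0 = 1 ∧ m 1 = 0 ∧ m 2 = 0 ∧ m 3 = 0) ∨ (m 0 = 0 ∧ m 1 = 1 ∧ m 2 = 0 ∧ m 3 = 0)
        ∨ (m 0 = 0 ∧ m 1 = 0 ∧ m 2 = 1 ∧ m 3 = 0) ∨ (m 0 = 0 ∧ m 1 = 0 ∧ m 2 = 0 ∧ m 3 = 1) := by
      omega
    have hex : ∃ j0 : Fin 4, m = Finsupp.single j0 1 := by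
      obtain h1 | h1 | h1 | h1 := this
      · exact ⟨0, by ext k; fin_cases k <;> simp [Finsupp.single_apply, h1.1, h1.2.1, h1.2.2.1, h1.2.2.2]⟩
      · exact ⟨1, by ext k; fin_cases k <;> simp [Finsupp.single_apply, h1.1, h1.2.1, h1.2.2.1, h1.2.2.2]⟩
      · exact ⟨2, by ext k; fin_cases k <;> simp [Finsupp.single_apply, h1.1, h1.2.1, h1.2.2.1, h1.2.2.2]⟩
      · exact ⟨3, by ext k; fin_cases k <;> simp [Finsupp.single_apply, h1.1, h1.2.1, h1.2.2.1, h1.2.2.2]⟩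
    obtain ⟨j0, hm⟩ := hex
    rw [hm, Fin.sum_univ_four]
    fin_cases j0 <;> simp [Finsupp.single_left_inj]

lemma fermat_f_hom : (X 0 ^ 3 + X 1 ^ 3 + X 2 ^ 3 + X 3 ^ 3 :
    MvPolynomial (Fin 4) ℂ).IsHomogeneous 3 :=
  (((isHomogeneous_X_pow 0 3).add (isHomogeneous_X_pow 1 3)).add
    (isHomogeneous_X_pow 2 3)).add (isHomogeneous_X_pow 3 3)

lemma fermat_L2 (P : MvPolynomial (Fin 4) ℂ) (hP : P ∈ cubicIdeal)
    (hP3 : P.IsHomogeneous 3) :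
    ∃ c : ℂ, P = C c * (X 0 ^ 3 + X 1 ^ 3 + X 2 ^ 3 + X 3 ^ 3) := by
  set f : MvPolynomial (Fin 4) ℂ := X 0 ^ 3 + X 1 ^ 3 + X 2 ^ 3 + X 3 ^ 3 with hf
  obtain ⟨g, hg⟩ := Ideal.mem_span_singleton'.mp hP
  refine ⟨coeff 0 g, ?_⟩
  have h1 : P = homogeneousComponent 3 P := by
    rw [homogeneousComponent_of_mem ((mem_homogeneousSubmodule _ _).mpr hP3), if_pos rfl]
  calc P = homogeneousComponent 3 (g * f) := by rw [hf, hg]; exact h1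
    _ = homogeneousComponent 3 ((∑ k ∈ Finset.range (g.totalDegree + 1),
          homogeneousComponent k g) * f) := by rw [sum_homogeneousComponent]
    _ = ∑ k ∈ Finset.range (g.totalDegree + 1),
          homogeneousComponent 3 (homogeneousComponent k g * f) := by
        rw [Finset.sum_mul, map_sum]
    _ = ∑ k ∈ Finset.range (g.totalDegree + 1),
          if k = 0 then homogeneousComponent 0 g * f else 0 := by
        refine Finset.sum_congr rfl fun k _ => ?_
        have hk : (homogeneousComponent k g * f) ∈ homogeneousSubmodule (Fin 4) ℂ (k + 3) :=
          (mem_homogeneousSubmodule _ _).mpr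
            ((homogeneousComponent_isHomogeneous k g).mul fermat_f_hom)
        rw [homogeneousComponent_of_mem hk]
        rcases eq_or_ne k 0 with rfl | hk0
        · simp
        · rw [if_neg (by omega), if_neg hk0]
    _ = homogeneousComponent 0 g * f := by
        rw [Finset.sum_ite_eq' (Finset.range (g.totalDegree + 1)) 0]
        rw [if_pos (Finset.mem_range.mpr (Nat.succ_pos _))]
    _ = C (coeff 0 g) * f := by rw [homogeneousComponent_zero]

lemma fermat_key (a : Fin 4 → Fin 4 → ℂ) (c : ℂ)
    (h : ∀ v : Fin 4 → ℂ, ∑ i : Fin 4, 3 * v i ^ 2 * (∑ j : Fin 4, a i j * v j)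
      = c * ∑ i : Fin 4, v i ^ 3) :
    ∀ i j : Fin 4, a i j = if i = j then c / 3 else 0 := by
  have h00 := h ![1,0,0,0]
  have h11 := h ![0,1,0,0]
  have h22 := h ![0,0,1,0]
  have h33 := h ![0,0,0,1]
  have p01 := h ![1,1,0,0]
  have m01 := h ![1,-1,0,0]
  have p02 := h ![1,0,1,0]
  have m02 := h ![1,0,-1,0]
  have p03 := h ![1,0,0,1]
  have m03 := h ![1,0,0,-1]
  have p12 := h ![0,1,1,0]
  have m12 := h ![0,1,-1,0]
  have p13 := h ![0,1,0,1]
  have m13 := h ![0,1,0,-1]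
  have p23 := h ![0,0,1,1]
  have m23 := h ![0,0,1,-1]
  simp only [Fin.sum_univ_four, Matrix.cons_val_zero, Matrix.cons_val_one,
    Matrix.head_cons, Matrix.cons_val_two, Matrix.tail_cons, Matrix.cons_val_three,
    Matrix.cons_val_fin_one, mul_zero, mul_one, zero_mul, one_mul, add_zero, zero_add,
    mul_neg, neg_mul, neg_neg, one_pow, zero_pow, ne_eq] at h00 h11 h22 h33 p01 m01 p02 m02 p03 m03 p12 m12 p13 m13 p23 m23
  intro i j
  fin_cases i <;> fin_cases j
  · show a 0 0 = if (0 : Fin 4) = (0 : Fin 4) then c / 3 else 0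
    rw [if_pos rfl]
    linear_combination h00/3
  · show a 0 1 = if (0 : Fin 4) = (1 : Fin 4) then c / 3 else 0
    rw [if_neg (by decide)]
    linear_combination (p01 - m01)/6 - h11/3
  · show a 0 2 = if (0 : Fin 4) = (2 : Fin 4) then c / 3 else 0
    rw [if_neg (by decide)]
    linear_combination (p02 - m02)/6 - h22/3
  · show a 0 3 = if (0 : Fin 4) = (3 : Fin 4) then c / 3 else 0
    rw [if_neg (by decide)]
    linear_combination (p03 - m03)/6 - h33/3
  · show a 1 0 = if (1 : Fin 4) = (0 : Fin 4) then c / 3 else 0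
    rw [if_neg (by decide)]
    linear_combination (p01 + m01)/6 - h00/3
  · show a 1 1 = if (1 : Fin 4) = (1 : Fin 4) then c / 3 else 0
    rw [if_pos rfl]
    linear_combination h11/3
  · show a 1 2 = if (1 : Fin 4) = (2 : Fin 4) then c / 3 else 0
    rw [if_neg (by decide)]
    linear_combination (p12 - m12)/6 - h22/3
  · show a 1 3 = if (1 : Fin 4) = (3 : Fin 4) then c / 3 else 0
    rw [if_neg (by decide)]
    linear_combination (p13 - m13)/6 - h33/3
  · show a 2 0 = if (2 : Fin 4) = (0 : Fin 4) then c / 3 else 0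
    rw [if_neg (by decide)]
    linear_combination (p02 + m02)/6 - h00/3
  · show a 2 1 = if (2 : Fin 4) = (1 : Fin 4) then c / 3 else 0
    rw [if_neg (by decide)]
    linear_combination (p12 + m12)/6 - h11/3
  · show a 2 2 = if (2 : Fin 4) = (2 : Fin 4) then c / 3 else 0
    rw [if_pos rfl]
    linear_combination h22/3
  · show a 2 3 = if (2 : Fin 4) = (3 : Fin 4) then c / 3 else 0
    rw [if_neg (by decide)]
    linear_combination (p23 - m23)/6 - h33/3
  · show a 3 0 = if (3 : Fin 4) = (0 : Fin 4) then c / 3 else 0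
    rw [if_neg (by decide)]
    linear_combination (p03 + m03)/6 - h00/3
  · show a 3 1 = if (3 : Fin 4) = (1 : Fin 4) then c / 3 else 0
    rw [if_neg (by decide)]
    linear_combination (p13 + m13)/6 - h11/3
  · show a 3 2 = if (3 : Fin 4) = (2 : Fin 4) then c / 3 else 0
    rw [if_neg (by decide)]
    linear_combination (p23 + m23)/6 - h22/3
  · show a 3 3 = if (3 : Fin 4) = (3 : Fin 4) then c / 3 else 0
    rw [if_pos rfl]
    linear_combination h33/3

set_option maxHeartbeats 1000000 in
/-- let `E` be the Euler derivation of `R = ℂ[x,y,z,w]/(x³+y³+z³+w³)`,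
characterized by `E r = d • r` for homogeneous `r` of degree `d`.  Then every ℂ-linear
derivation of `R` that is homogeneous of degree `0` is a ℂ-scalar multiple of `E`. -/
theorem degree_zero_derivations_are_multiples_of_euler
    (E : RCubic →ₗ[ℂ] RCubic)
    (hE : ∀ d : ℕ, ∀ r ∈ quotGrade ℂ cubicIdeal d, E r = (d : ℂ) • r)
    (δ : RCubic →ₗ[ℂ] RCubic)
    (hleib : ∀ r s : RCubic, δ (r * s) = r * δ s + s * δ r)
    (hhom : ∀ d : ℕ, ∀ r ∈ quotGrade ℂ cubicIdeal d, δ r ∈ quotGrade ℂ cubicIdeal d) :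
    ∃ c : ℂ, δ = c • E := by
  classical
  set mk : MvPolynomial (Fin 4) ℂ →ₐ[ℂ] RCubic := Ideal.Quotient.mkₐ ℂ cubicIdeal with hmkdef
  have hmkX : ∀ i : Fin 4, mk (X i) ∈ quotGrade ℂ cubicIdeal 1 := fun i =>
    ⟨X i, (mem_homogeneousSubmodule _ _).mpr (isHomogeneous_X _ i), rfl⟩
  have hδ1 : δ 1 = 0 := by
    have h := hleib 1 1
    simp only [one_mul, mul_one] at h
    exact left_eq_add.mp h
  have hcube : ∀ r : RCubic, δ (r ^ 3) = 3 * r ^ 2 * δ r := by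
    intro r
    have h2 : δ (r ^ 2) = 2 * r * δ r := by rw [sq, hleib]; ring
    rw [pow_succ, hleib, h2]; ring
  -- the linear polynomials q i with mk (q i) = δ (mk (X i))
  have hq : ∀ i : Fin 4, ∃ qi : MvPolynomial (Fin 4) ℂ,
      qi.IsHomogeneous 1 ∧ mk qi = δ (mk (X i)) := by
    intro i
    obtain ⟨qi, hq1, hq2⟩ := hhom 1 _ (hmkX i)
    exact ⟨qi, (mem_homogeneousSubmodule _ _).mp hq1, hq2⟩
  choose q hq1 hq2 using hq
  -- the relation
  have hfmem : (X 0 ^ 3 + X 1 ^ 3 + X 2 ^ 3 + X 3 ^ 3 : MvPolynomial (Fin 4) ℂ) ∈ cubicIdeal :=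
    Ideal.subset_span rfl
  have hP0 : mk (∑ i : Fin 4, C (3:ℂ) * (X i ^ 2 * q i)) = 0 := by
    have h00 : mk (X 0) ^ 3 + mk (X 1) ^ 3 + mk (X 2) ^ 3 + mk (X 3) ^ 3 = 0 := by
      rw [← map_pow, ← map_pow, ← map_pow, ← map_pow, ← map_add, ← map_add, ← map_add]
      rw [hmkdef, Ideal.Quotient.mkₐ_eq_mk]
      exact Ideal.Quotient.eq_zero_iff_mem.mpr hfmem
    have h0 : δ (mk (X 0) ^ 3 + mk (X 1) ^ 3 + mk (X 2) ^ 3 + mk (X 3) ^ 3) = 0 := by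
      rw [h00, map_zero]
    rw [map_add, map_add, map_add, hcube, hcube, hcube, hcube] at h0
    rw [map_sum, Fin.sum_univ_four]
    simp only [map_mul, map_pow, AlgHom.commutes, map_ofNat]
    rw [hq2 0, hq2 1, hq2 2, hq2 3]
    linear_combination h0
  have hPmem : (∑ i : Fin 4, C (3:ℂ) * (X i ^ 2 * q i)) ∈ cubicIdeal := by
    apply Ideal.Quotient.eq_zero_iff_mem.mp
    rw [← Ideal.Quotient.mkₐ_eq_mk ℂ]
    exact hP0
  have hP3 : (∑ i : Fin 4, C (3:ℂ) * (X i ^ 2 * q i)).IsHomogeneous 3 := by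
    apply MvPolynomial.IsHomogeneous.sum
    intro i _
    exact ((isHomogeneous_X_pow i 2).mul (hq1 i)).C_mul 3
  obtain ⟨c, hc⟩ := fermat_L2 _ hPmem hP3
  have hqv : ∀ (v : Fin 4 → ℂ) (i : Fin 4), eval v (q i)
      = ∑ j : Fin 4, coeff (Finsupp.single j 1) (q i) * v j := by
    intro v i
    conv_lhs => rw [fermat_L1 (q i) (hq1 i)]
    rw [map_sum]
    simp only [eval_mul, eval_C, eval_X]
  have hev : ∀ v : Fin 4 → ℂ, ∑ i : Fin 4, 3 * v i ^ 2 *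
      (∑ j : Fin 4, coeff (Finsupp.single j 1) (q i) * v j) = c * ∑ i : Fin 4, v i ^ 3 := by
    intro v
    have h := congrArg (eval v) hc
    rw [map_sum] at h
    simp only [eval_mul, eval_pow, eval_C, eval_X, eval_add, hqv, Fin.sum_univ_four] at h ⊢
    linear_combination h
  have ha : ∀ i j : Fin 4, coeff (Finsupp.single j 1) (q i) = if i = j then c / 3 else 0 :=
    fermat_key (fun i j => coeff (Finsupp.single j 1) (q i)) c hev
  have hδX : ∀ i, δ (mk (X i)) = (c/3) • mk (X i) := by
    intro i
    rw [← hq2 i]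
    conv_lhs => rw [fermat_L1 (q i) (hq1 i)]
    rw [map_sum]
    calc ∑ j : Fin 4, mk (C (coeff (Finsupp.single j 1) (q i)) * X j)
        = ∑ j : Fin 4, ((if i = j then c/3 else 0) • mk (X j)) := by
          refine Finset.sum_congr rfl fun j _ => ?_
          rw [← smul_eq_C_mul, map_smul, ha i j]
      _ = (c/3) • mk (X i) := by
          simp only [ite_smul, zero_smul]
          rw [Finset.sum_ite_eq]
          simp
  have hmul : ∀ (p : MvPolynomial (Fin 4) ℂ) (i : Fin 4),
      E (mk (p * X i)) = mk p * mk (X i) + mk (X i) * E (mk p) := by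
    intro p i
    have e1 : mk (p * X i) = ∑ d ∈ Finset.range (p.totalDegree + 1),
        mk (homogeneousComponent d p * X i) := by
      conv_lhs => rw [← sum_homogeneousComponent p]
      rw [Finset.sum_mul, map_sum]
    have e2 : mk p = ∑ d ∈ Finset.range (p.totalDegree + 1),
        mk (homogeneousComponent d p) := by
      conv_lhs => rw [← sum_homogeneousComponent p]
      rw [map_sum]
    rw [e1, e2, map_sum E, map_sum E, Finset.sum_mul, Finset.mul_sum,
      ← Finset.sum_add_distrib]
    refine Finset.sum_congr rfl fun d _ => ?_
    have hhd : mk (homogeneousComponent d p * X i) ∈ quotGrade ℂ cubicIdeal (d+1) :=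
      ⟨_, (mem_homogeneousSubmodule _ _).mpr
        ((homogeneousComponent_isHomogeneous d p).mul (isHomogeneous_X _ i)), rfl⟩
    have hd2 : mk (homogeneousComponent d p) ∈ quotGrade ℂ cubicIdeal d :=
      ⟨_, (mem_homogeneousSubmodule _ _).mpr (homogeneousComponent_isHomogeneous d p), rfl⟩
    rw [hE _ _ hhd, hE _ _ hd2, map_mul]
    push_cast
    rw [add_smul, one_smul, mul_smul_comm,
      mul_comm (mk (X i)) (mk (homogeneousComponent d p))]
    exact add_comm _ _
  refine ⟨c/3, ?_⟩
  apply LinearMap.ext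
  intro r
  obtain ⟨p, rfl⟩ := Ideal.Quotient.mk_surjective r
  rw [LinearMap.smul_apply]
  show δ (mk p) = (c/3) • E (mk p)
  induction p using MvPolynomial.induction_on with
  | C a =>
    have h0 : mk (C a) ∈ quotGrade ℂ cubicIdeal 0 :=
      ⟨C a, (mem_homogeneousSubmodule _ _).mpr (isHomogeneous_C _ _), rfl⟩
    rw [hE 0 _ h0, Nat.cast_zero, zero_smul, smul_zero]
    have hca : mk (C a) = a • (1 : RCubic) := by
      rw [show (C a : MvPolynomial (Fin 4) ℂ) = algebraMap ℂ _ a from rfl,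
        AlgHom.commutes, Algebra.algebraMap_eq_smul_one]
    rw [hca, map_smul, hδ1, smul_zero]
  | add p1 p2 h1 h2 => rw [map_add, map_add, h1, h2, map_add, smul_add]
  | mul_X p1 i hp =>
    have lhs : δ (mk (p1 * X i)) = mk p1 * ((c/3) • mk (X i)) + mk (X i) * ((c/3) • E (mk p1)) := by
      rw [map_mul, hleib, hδX i, hp]
    rw [lhs, hmul p1 i, smul_add, mul_smul_comm, mul_smul_comm]
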